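/- arXiv:1512.05293 — 2 statements merged into one kernel-verified Lean document; each statement's English description precedes it below -/
import Mathlib

section
/- The Hurwitz type poly-Bernoulli numbers B_{n,a}^{(k)} defined by the generating function Φ(1-e^{-t}, k, a) = Σ_{n≥0} B_{n,a}^{(k)} t^n/n! satisfy the explicit formula B_{n,a}^{(k)} = (-1)^n Σ_{m=0}^{n} (-1)^m m! S(n,m) / (m+a)^k, where S(n,m) are Stirling numbers of the second kind. -/
open scoped BigOperators
open Finset

/-- Stirling numbers of the second kind. -/
def S2 : ℕ → ℕ → ℕ
  | 0, 0 => 1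
  | 0, _ + 1 => 0
  | _ + 1, 0 => 0
  | n + 1, m + 1 => (m + 1) * S2 n (m + 1) + S2 n m

/-- Multiple polylogarithm Li_{(k_1,...,k_r)}(z); for r = 0 it is z/(1-z). -/
noncomputable def multiLi : (r : ℕ) → (Fin r → ℤ) → ℝ → ℝ
  | 0, _, z => z / (1 - z)
  | r + 1, k, z =>
      ∑' m : {f : Fin (r + 1) → ℕ // StrictMono f ∧ 0 < f 0},
        z ^ (m.1 (Fin.last r)) / ∏ i, ((m.1 i : ℝ)) ^ (k i)

/-- Generalized Hurwitz-Lerch multiple zeta value Φ_{(k_1,...,k_{r+1})}(z,a). -/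
noncomputable def multiPhi (r : ℕ) (k : Fin (r + 1) → ℤ) (z a : ℝ) : ℝ :=
  ∑' m : {f : Fin (r + 1) → ℕ // Monotone f},
    z ^ (m.1 (Fin.last r)) /
      ∏ i, ((m.1 i : ℝ) + a - ((r : ℝ) + 1) + ((i : ℕ) + 1)) ^ (k i)

lemma S2_eq_zero : ∀ {n m : ℕ}, n < m → S2 n m = 0 := by
  intro n
  induction n with
  | zero => intro m h; cases m with
    | zero => omega
    | succ m => rfl
  | succ n ih =>
    intro m h
    cases m with
    | zero => omega
    | succ m =>
      rw [S2, ih (by omega), ih (by omega)]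
      simp

lemma stirling_sum (n : ℕ) : ∀ m : ℕ,
    ∑ j ∈ Finset.range (m + 1), (-1 : ℝ) ^ j * (m.choose j : ℝ) * (j : ℝ) ^ n
      = (-1 : ℝ) ^ m * (m.factorial : ℝ) * (S2 n m : ℝ) := by
  induction n with
  | zero =>
    intro m
    have h := Int.alternating_sum_range_choose (n := m)
    have h' : ∑ j ∈ Finset.range (m + 1), (-1 : ℝ) ^ j * (m.choose j : ℝ) =
        if m = 0 then 1 else 0 := by
      have := congrArg (fun z : ℤ => (z : ℝ)) h
      push_cast at this
      simpa using this
    simp only [pow_zero, mul_one]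
    rw [h']
    cases m with
    | zero => simp [S2]
    | succ m => simp [S2]
  | succ n ih =>
    intro m
    cases m with
    | zero => simp [S2]
    | succ m =>
      have key : ∀ j ∈ Finset.range (m + 2),
          (-1 : ℝ) ^ j * ((m+1).choose j : ℝ) * (j : ℝ) ^ (n+1)
            = ((m : ℝ) + 1) * ((-1 : ℝ) ^ j * ((m+1).choose j : ℝ) * (j : ℝ) ^ n)
              - ((m : ℝ) + 1) * ((-1 : ℝ) ^ j * (m.choose j : ℝ) * (j : ℝ) ^ n) := by
        intro j _
        cases j with
        | zero => simp
        | succ i =>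
          have h1 : ((m : ℝ) + 1) * (m.choose i : ℝ)
              = ((m+1).choose (i+1) : ℝ) * ((i : ℝ) + 1) := by
            exact_mod_cast Nat.add_one_mul_choose_eq m i
          have h2 : ((m+1).choose (i+1) : ℝ) = (m.choose i : ℝ) + (m.choose (i+1) : ℝ) := by
            exact_mod_cast Nat.choose_succ_succ m i
          push_cast
          linear_combination (-((-1 : ℝ) ^ (i+1)) * ((i : ℝ) + 1) ^ n) * h1
            - ((m : ℝ) + 1) * ((-1 : ℝ) ^ (i+1) * ((i : ℝ) + 1) ^ n) * h2
      rw [Finset.sum_congr rfl key, Finset.sum_sub_distrib, ← Finset.mul_sum, ← Finset.mul_sum]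
      have hlast : ∑ j ∈ Finset.range (m + 2), (-1 : ℝ) ^ j * (m.choose j : ℝ) * (j : ℝ) ^ n
          = ∑ j ∈ Finset.range (m + 1), (-1 : ℝ) ^ j * (m.choose j : ℝ) * (j : ℝ) ^ n := by
        rw [Finset.sum_range_succ]
        simp [Nat.choose_eq_zero_of_lt (by omega : m < m + 1)]
      rw [hlast, ih m, ih (m+1)]
      have hS : (S2 (n+1) (m+1) : ℝ) = ((m : ℝ) + 1) * (S2 n (m+1) : ℝ) + (S2 n m : ℝ) := by
        rw [S2]; push_cast; ring
      rw [hS]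
      have hfac : ((m+1).factorial : ℝ) = ((m : ℝ) + 1) * (m.factorial : ℝ) := by
        rw [Nat.factorial_succ]; push_cast; ring
      rw [hfac, pow_succ]
      ring


lemma neg_one_pow_sub_eq {m j : ℕ} (h : j ≤ m) :
    (-1 : ℝ) ^ (m - j) = (-1 : ℝ) ^ m * (-1 : ℝ) ^ j := by
  have hsq : (-1 : ℝ) ^ j * (-1 : ℝ) ^ j = 1 := by
    rw [← pow_add]; exact Even.neg_one_pow ⟨j, rfl⟩
  calc (-1 : ℝ) ^ (m - j) = (-1 : ℝ) ^ (m - j) * ((-1 : ℝ) ^ j * (-1 : ℝ) ^ j) := by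
        rw [hsq, mul_one]
    _ = (-1 : ℝ) ^ m * (-1 : ℝ) ^ j := by
        rw [← mul_assoc, ← pow_add, Nat.sub_add_cancel h]

lemma stirling_sum' (n m : ℕ) :
    ∑ j ∈ Finset.range (m + 1), (-1 : ℝ) ^ (m - j) * (m.choose j : ℝ) * (j : ℝ) ^ n
      = (m.factorial : ℝ) * (S2 n m : ℝ) := by
  have h : ∀ j ∈ Finset.range (m + 1),
      (-1 : ℝ) ^ (m - j) * (m.choose j : ℝ) * (j : ℝ) ^ n
        = (-1 : ℝ) ^ m * ((-1 : ℝ) ^ j * (m.choose j : ℝ) * (j : ℝ) ^ n) := by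
    intro j hj
    rw [neg_one_pow_sub_eq (Nat.lt_succ_iff.mp (Finset.mem_range.mp hj))]
    ring
  rw [Finset.sum_congr rfl h, ← Finset.mul_sum, stirling_sum n m, ← mul_assoc, ← mul_assoc,
    ← pow_add]
  rw [Even.neg_one_pow ⟨m, rfl⟩, one_mul]

set_option maxHeartbeats 1000000 in
lemma hasSum_exp_sub_one_pow (m : ℕ) (x : ℝ) :
    HasSum (fun n : ℕ => (m.factorial : ℝ) * (S2 n m : ℝ) * x ^ n / (n.factorial : ℝ))
      ((Real.exp x - 1) ^ m) := by
  have he : ∀ j : ℕ, HasSum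
      (fun n : ℕ => ((-1 : ℝ) ^ (m - j) * (m.choose j : ℝ)) * (((j : ℝ) * x) ^ n / n.factorial))
      (((-1 : ℝ) ^ (m - j) * (m.choose j : ℝ)) * Real.exp ((j : ℝ) * x)) := by
    intro j
    have : HasSum (fun n : ℕ => ((j : ℝ) * x) ^ n / n.factorial) (Real.exp ((j : ℝ) * x)) := by
      rw [Real.exp_eq_exp_ℝ]
      exact NormedSpace.expSeries_div_hasSum_exp ((j : ℝ) * x)
    exact this.mul_left _
  have hsum : HasSum (fun n : ℕ => ∑ j ∈ Finset.range (m + 1),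
      ((-1 : ℝ) ^ (m - j) * (m.choose j : ℝ)) * (((j : ℝ) * x) ^ n / n.factorial))
      (∑ j ∈ Finset.range (m + 1),
        ((-1 : ℝ) ^ (m - j) * (m.choose j : ℝ)) * Real.exp ((j : ℝ) * x)) :=
    hasSum_sum fun j _ => he j
  have hval : ∑ j ∈ Finset.range (m + 1),
      ((-1 : ℝ) ^ (m - j) * (m.choose j : ℝ)) * Real.exp ((j : ℝ) * x)
        = (Real.exp x - 1) ^ m := by
    rw [sub_eq_add_neg, add_pow]
    refine Finset.sum_congr rfl fun j hj => ?_
    rw [Real.exp_nat_mul, neg_one_pow_sub_eq (Nat.lt_succ_iff.mp (Finset.mem_range.mp hj))]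
    ring
  have hfun : ∀ n : ℕ, ∑ j ∈ Finset.range (m + 1),
      ((-1 : ℝ) ^ (m - j) * (m.choose j : ℝ)) * (((j : ℝ) * x) ^ n / n.factorial)
        = (m.factorial : ℝ) * (S2 n m : ℝ) * x ^ n / (n.factorial : ℝ) := by
    intro n
    rw [← stirling_sum' n m, Finset.sum_mul, Finset.sum_div]
    refine Finset.sum_congr rfl fun j _ => ?_
    rw [mul_pow]
    ring
  rw [hval] at hsum
  have heq : (fun n : ℕ => (m.factorial : ℝ) * (S2 n m : ℝ) * x ^ n / (n.factorial : ℝ))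
      = fun n : ℕ => ∑ j ∈ Finset.range (m + 1),
        ((-1 : ℝ) ^ (m - j) * (m.choose j : ℝ)) * (((j : ℝ) * x) ^ n / n.factorial) :=
    funext fun n => (hfun n).symm
  rw [heq]
  exact hsum

lemma summable_geom_zpow (k : ℤ) (a : ℝ) (ha : 0 < a) {q : ℝ} (hq0 : 0 ≤ q) (hq1 : q < 1) :
    Summable fun m : ℕ => q ^ m / ((m : ℝ) + a) ^ k := by
  have hma : ∀ m : ℕ, (0 : ℝ) < (m : ℝ) + a := fun m => by positivity
  rcases Int.natAbs_eq k with hk | hk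
  · -- k = natAbs k ≥ 0
    set K := k.natAbs
    refine Summable.of_nonneg_of_le (fun m => by positivity) (fun m => ?_)
      ((summable_geometric_of_lt_one hq0 hq1).mul_right (1 / a ^ K))
    rw [hk]
    rw [zpow_natCast]
    have h1 : a ^ K ≤ ((m : ℝ) + a) ^ K := by
      apply pow_le_pow_left₀ ha.le
      linarith [Nat.cast_nonneg (α := ℝ) m]
    have : (1 : ℝ) / ((m : ℝ) + a) ^ K ≤ 1 / a ^ K := by
      apply one_div_le_one_div_of_le (by positivity) h1
    calc q ^ m / ((m : ℝ) + a) ^ K = q ^ m * (1 / ((m : ℝ) + a) ^ K) := by ring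
      _ ≤ q ^ m * (1 / a ^ K) := by
          apply mul_le_mul_of_nonneg_left this (by positivity)
  · -- k = -natAbs k
    set K := k.natAbs
    have hbig : Summable fun m : ℕ => ((a : ℝ) + 1) ^ K * (((m : ℝ) + 1) ^ K * q ^ m) := by
      apply Summable.mul_left
      have : Summable fun m : ℕ => ∑ j ∈ Finset.range (K + 1),
          ((m : ℝ) ^ j * q ^ m) * ((1 : ℝ) ^ (K - j) * (K.choose j : ℝ)) := by
        apply summable_sum
        intro j _
        apply Summable.mul_right
        exact summable_pow_mul_geometric_of_norm_lt_one j (by rwa [Real.norm_eq_abs, abs_of_nonneg hq0])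
      refine this.congr fun m => ?_
      rw [add_pow, Finset.sum_mul]
      refine Finset.sum_congr rfl fun j _ => by ring
    refine Summable.of_nonneg_of_le (fun m => by positivity) (fun m => ?_) hbig
    rw [hk, zpow_neg, zpow_natCast, div_eq_mul_inv, inv_inv]
    have h2 : ((m : ℝ) + a) ^ K ≤ (((m : ℝ) + 1) * (a + 1)) ^ K := by
      apply pow_le_pow_left₀ (hma m).le
      nlinarith [Nat.cast_nonneg (α := ℝ) m]
    calc q ^ m * ((m : ℝ) + a) ^ K ≤ q ^ m * (((m : ℝ) + 1) * (a + 1)) ^ K := by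
          apply mul_le_mul_of_nonneg_left h2 (by positivity)
      _ = ((a : ℝ) + 1) ^ K * (((m : ℝ) + 1) ^ K * q ^ m) := by rw [mul_pow]; ring

lemma phi_expansion (k : ℤ) (a : ℝ) (ha : 0 < a) (t : ℝ) (ht : |t| < 1/2) :
    HasSum (fun n : ℕ => ((-1 : ℝ) ^ n * ∑ m ∈ Finset.range (n + 1),
        (-1 : ℝ) ^ m * (m.factorial : ℝ) * (S2 n m : ℝ) / ((m : ℝ) + a) ^ k)
          * t ^ n / (n.factorial : ℝ))
      (∑' m : ℕ, (1 - Real.exp (-t)) ^ m / ((m : ℝ) + a) ^ k) := by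
  have hw : ∀ m : ℕ, (0 : ℝ) < ((m : ℝ) + a) ^ k := fun m => zpow_pos (by positivity) k
  set F : ℕ × ℕ → ℝ := fun p =>
    (-1 : ℝ) ^ p.1 * (p.1.factorial : ℝ) * (S2 p.2 p.1 : ℝ) * (-t) ^ p.2
      / ((p.2.factorial : ℝ) * ((p.1 : ℝ) + a) ^ k) with hFdef
  have hfib : ∀ m : ℕ, HasSum (fun n => F (m, n))
      ((1 - Real.exp (-t)) ^ m / ((m : ℝ) + a) ^ k) := by
    intro m
    have h1 := (hasSum_exp_sub_one_pow m (-t)).mul_left ((-1 : ℝ) ^ m / ((m : ℝ) + a) ^ k)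
    have h2 : ((-1 : ℝ) ^ m / ((m : ℝ) + a) ^ k) * (Real.exp (-t) - 1) ^ m
        = (1 - Real.exp (-t)) ^ m / ((m : ℝ) + a) ^ k := by
      rw [div_mul_eq_mul_div, ← mul_pow, neg_one_mul, neg_sub]
    have heq : (fun n => F (m, n)) = fun n => ((-1 : ℝ) ^ m / ((m : ℝ) + a) ^ k) *
        ((m.factorial : ℝ) * (S2 n m : ℝ) * (-t) ^ n / (n.factorial : ℝ)) := by
      funext n
      simp only [hFdef]
      ring
    rw [heq, ← h2]
    exact h1
  have habsval : ∀ m : ℕ, HasSum (fun n => |F (m, n)|)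
      ((Real.exp |t| - 1) ^ m / ((m : ℝ) + a) ^ k) := by
    intro m
    have h1 := (hasSum_exp_sub_one_pow m |t|).mul_left (1 / ((m : ℝ) + a) ^ k)
    have heq : (fun n => |F (m, n)|) = fun n => (1 / ((m : ℝ) + a) ^ k) *
        ((m.factorial : ℝ) * (S2 n m : ℝ) * |t| ^ n / (n.factorial : ℝ)) := by
      funext n
      simp only [hFdef]
      rw [abs_div, abs_mul, abs_mul, abs_mul, abs_pow, abs_pow, abs_neg, abs_mul]
      rw [abs_of_pos (hw m), abs_neg, abs_one, one_pow, one_mul,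
        Nat.abs_cast, Nat.abs_cast, Nat.abs_cast]
      ring
    rw [heq]
    have h2 : (1 / ((m : ℝ) + a) ^ k) * (Real.exp |t| - 1) ^ m
        = (Real.exp |t| - 1) ^ m / ((m : ℝ) + a) ^ k := by ring
    rw [← h2]
    exact h1
  have hq0 : (0 : ℝ) ≤ Real.exp |t| - 1 := by
    have := Real.one_le_exp (abs_nonneg t)
    linarith
  have hq1 : Real.exp |t| - 1 < 1 := by
    have hlog : |t| < Real.log 2 := lt_trans ht (by
      have := Real.log_two_gt_d9
      norm_num at this ⊢
      linarith)
    have : Real.exp |t| < 2 := by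
      calc Real.exp |t| < Real.exp (Real.log 2) := Real.exp_lt_exp.mpr hlog
        _ = 2 := Real.exp_log two_pos
    linarith
  have habs : Summable fun p : ℕ × ℕ => |F p| := by
    rw [summable_prod_of_nonneg (fun p => abs_nonneg _)]
    refine ⟨fun m => (habsval m).summable, ?_⟩
    have hval : (fun m : ℕ => ∑' n, |F (m, n)|)
        = fun m : ℕ => (Real.exp |t| - 1) ^ m / ((m : ℝ) + a) ^ k :=
      funext fun m => (habsval m).tsum_eq
    rw [hval]
    exact summable_geom_zpow k a ha hq0 hq1
  have hFs : Summable F := summable_abs_iff.mp habs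
  have hg : HasSum (fun m : ℕ => (1 - Real.exp (-t)) ^ m / ((m : ℝ) + a) ^ k) (∑' p, F p) :=
    hFs.hasSum.prod_fiberwise hfib
  have hswap : HasSum (fun p : ℕ × ℕ => F (p.2, p.1)) (∑' p, F p) :=
    ((Equiv.prodComm ℕ ℕ).hasSum_iff).mpr hFs.hasSum
  have hfib2 : ∀ n : ℕ, HasSum (fun m => F (m, n)) (∑ m ∈ Finset.range (n + 1), F (m, n)) := by
    intro n
    apply hasSum_sum_of_ne_finset_zero
    intro m hm
    have hnm : n < m := by simpa [Nat.lt_succ_iff] using hm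
    simp [hFdef, S2_eq_zero hnm]
  have hA : HasSum (fun n => ∑ m ∈ Finset.range (n + 1), F (m, n)) (∑' p, F p) :=
    hswap.prod_fiberwise hfib2
  have hterm : ∀ n : ℕ, ((-1 : ℝ) ^ n * ∑ m ∈ Finset.range (n + 1),
      (-1 : ℝ) ^ m * (m.factorial : ℝ) * (S2 n m : ℝ) / ((m : ℝ) + a) ^ k)
        * t ^ n / (n.factorial : ℝ) = ∑ m ∈ Finset.range (n + 1), F (m, n) := by
    intro n
    rw [Finset.mul_sum, Finset.sum_mul, Finset.sum_div]
    refine Finset.sum_congr rfl fun m _ => ?_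
    simp only [hFdef]
    rw [neg_pow]
    ring
  have heq2 : (fun n : ℕ => ((-1 : ℝ) ^ n * ∑ m ∈ Finset.range (n + 1),
      (-1 : ℝ) ^ m * (m.factorial : ℝ) * (S2 n m : ℝ) / ((m : ℝ) + a) ^ k)
        * t ^ n / (n.factorial : ℝ)) = fun n => ∑ m ∈ Finset.range (n + 1), F (m, n) :=
    funext hterm
  rw [heq2, hg.tsum_eq]
  exact hA

/-- Explicit formula for Hurwitz type poly-Bernoulli numbers. -/
theorem hurwitz_poly_bernoulli_explicit (k : ℤ) (a : ℝ) (ha : 0 < a) (B : ℕ → ℝ)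
    (ε : ℝ) (hε : 0 < ε)
    (hB : ∀ t : ℝ, |t| < ε →
      ∑' n : ℕ, B n * t ^ n / (n.factorial : ℝ) =
        ∑' m : ℕ, (1 - Real.exp (-t)) ^ m / ((m : ℝ) + a) ^ k) :
    ∀ n : ℕ, B n = (-1 : ℝ) ^ n *
      ∑ m ∈ Finset.range (n + 1),
        (-1 : ℝ) ^ m * (m.factorial : ℝ) * (S2 n m : ℝ) / ((m : ℝ) + a) ^ k := by
  have hA := fun (n : ℕ) => rfl (a := (-1 : ℝ) ^ n *
      ∑ m ∈ Finset.range (n + 1),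
        (-1 : ℝ) ^ m * (m.factorial : ℝ) * (S2 n m : ℝ) / ((m : ℝ) + a) ^ k)
  set A : ℕ → ℝ := fun n => (-1 : ℝ) ^ n *
      ∑ m ∈ Finset.range (n + 1),
        (-1 : ℝ) ^ m * (m.factorial : ℝ) * (S2 n m : ℝ) / ((m : ℝ) + a) ^ k with hAdef
  set t0 : ℝ := min ε (1/2) / 2 with ht0def
  have ht0pos : 0 < t0 := by
    have := lt_min hε (by norm_num : (0:ℝ) < 1/2)
    rw [ht0def]; linarith
  have ht0ε : t0 < ε := by
    have h1 : min ε (1/2) ≤ ε := min_le_left _ _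
    rw [ht0def]; linarith
  have ht0h : t0 < 1/2 := by
    have h1 : min ε (1/2) ≤ 1/2 := min_le_right _ _
    rw [ht0def]; linarith
  -- positivity of the RHS generating function at t0
  have hqpos : 0 ≤ 1 - Real.exp (-t0) := by
    have : Real.exp (-t0) ≤ Real.exp 0 := Real.exp_le_exp.mpr (by linarith)
    rw [Real.exp_zero] at this; linarith
  have hq1 : 1 - Real.exp (-t0) < 1 := by
    have := Real.exp_pos (-t0); linarith
  have hgsum : Summable (fun m : ℕ => (1 - Real.exp (-t0)) ^ m / ((m : ℝ) + a) ^ k) :=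
    summable_geom_zpow k a ha hqpos hq1
  have hgpos : 0 < ∑' m : ℕ, (1 - Real.exp (-t0)) ^ m / ((m : ℝ) + a) ^ k := by
    have h0 : (0 : ℝ) < (1 - Real.exp (-t0)) ^ 0 / (((0 : ℕ) : ℝ) + a) ^ k := by
      simp only [pow_zero, Nat.cast_zero, zero_add]
      rw [one_div]
      exact inv_pos.mpr (zpow_pos ha k)
    refine lt_of_lt_of_le h0 (Summable.le_tsum hgsum 0 fun m _ => ?_)
    have h1 : (0 : ℝ) < ((m : ℝ) + a) ^ k := zpow_pos (by positivity) k
    positivity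
  -- summability of the B-series at t0
  have habs : |t0| < ε := by rw [abs_of_pos ht0pos]; exact ht0ε
  have habs2 : |t0| < 1/2 := by rw [abs_of_pos ht0pos]; exact ht0h
  have hBsum : Summable (fun n : ℕ => B n * t0 ^ n / (n.factorial : ℝ)) := by
    by_contra hns
    have h := hB t0 habs
    rw [tsum_eq_zero_of_not_summable hns] at h
    exact absurd h.symm (ne_of_gt hgpos)
  have hAsum : Summable (fun n : ℕ => A n * t0 ^ n / (n.factorial : ℝ)) :=
    (phi_expansion k a ha t0 habs2).summable
  -- set up formal power series
  set c : ℕ → ℝ := fun n => B n / (n.factorial : ℝ) with hcdef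
  set d : ℕ → ℝ := fun n => A n / (n.factorial : ℝ) with hddef
  set p := FormalMultilinearSeries.ofScalars ℝ c with hpdef
  set q := FormalMultilinearSeries.ofScalars ℝ d with hqdef
  set r : NNReal := t0.toNNReal with hrdef
  have hrc : (r : ℝ) = t0 := Real.coe_toNNReal _ ht0pos.le
  have hradius : ∀ (e : ℕ → ℝ), Summable (fun n : ℕ => e n * t0 ^ n / (n.factorial : ℝ)) →
      (r : ENNReal) ≤ (FormalMultilinearSeries.ofScalars ℝ
        (fun n => e n / (n.factorial : ℝ))).radius := by
    intro e he
    apply FormalMultilinearSeries.le_radius_of_summable_norm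
    have h2 : Summable fun n : ℕ => |e n * t0 ^ n / (n.factorial : ℝ)| := he.abs
    refine h2.congr fun n => ?_
    rw [FormalMultilinearSeries.ofScalars_norm, Real.norm_eq_abs, hrc, abs_div, abs_div,
      abs_mul, abs_pow, abs_of_pos ht0pos, Nat.abs_cast]
    ring
  have hrpos : (0 : ENNReal) < (r : ENNReal) := by
    rw [hrdef]
    exact_mod_cast Real.toNNReal_pos.mpr ht0pos
  have hpr : 0 < p.radius := lt_of_lt_of_le hrpos (hradius B hBsum)
  have hqr : 0 < q.radius := lt_of_lt_of_le hrpos (hradius A hAsum)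
  have hpa : HasFPowerSeriesAt p.sum p 0 :=
    (p.hasFPowerSeriesOnBall hpr).hasFPowerSeriesAt
  have hqa : HasFPowerSeriesAt q.sum q 0 :=
    (q.hasFPowerSeriesOnBall hqr).hasFPowerSeriesAt
  -- the two sums agree near 0
  have hev : ∀ᶠ x in nhds (0 : ℝ), p.sum x = q.sum x := by
    filter_upwards [Metric.ball_mem_nhds (0 : ℝ) ht0pos] with x hx
    have hx' : |x| < t0 := by
      rw [mem_ball_zero_iff] at hx
      simpa using hx
    have hxε : |x| < ε := lt_trans hx' ht0ε
    have hxh : |x| < 1/2 := lt_trans hx' ht0h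
    have h1 : p.sum x = ∑' n : ℕ, B n * x ^ n / (n.factorial : ℝ) := by
      refine tsum_congr fun n => ?_
      rw [hpdef, FormalMultilinearSeries.ofScalars_apply_eq, hcdef]
      simp only [smul_eq_mul]
      ring
    have h2 : q.sum x = ∑' n : ℕ, A n * x ^ n / (n.factorial : ℝ) := by
      refine tsum_congr fun n => ?_
      rw [hqdef, FormalMultilinearSeries.ofScalars_apply_eq, hddef]
      simp only [smul_eq_mul]
      ring
    rw [h1, h2, hB x hxε, (phi_expansion k a ha x hxh).tsum_eq]
  have hpq : p = q := hpa.eq_formalMultilinearSeries_of_eventually hqa hev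
  have hcd : c = d := FormalMultilinearSeries.ofScalars_series_injective ℝ ℝ hpq
  intro n
  have h := congrFun hcd n
  rw [hcdef, hddef] at h
  simp only at h
  have hne : (n.factorial : ℝ) ≠ 0 := Nat.cast_ne_zero.mpr n.factorial_ne_zero
  calc B n = B n / (n.factorial : ℝ) * (n.factorial : ℝ) := by field_simp
    _ = A n / (n.factorial : ℝ) * (n.factorial : ℝ) := by rw [h]
    _ = A n := by field_simp
end

section
/- The generalized multi poly-Bernoulli polynomials satisfy B_n^{(k_1,...,k_r)}(x; a,b,c) = (ln a + ln b)^n · B_n^{(k_1,...,k_r)}((x ln c - r ln b)/(ln a + ln b)), where B_n^{(k_1,...,k_r)}(y) denotes the multi poly-Bernoulli polynomial defined by Li_{(k_1,...,k_r)}(1-e^{-t})/(1-e^{-t})^r · e^{yt} = Σ_{n≥0} B_n^{(k_1,...,k_r)}(y) t^n/n!. -/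
open scoped BigOperators
open Finset

lemma summable_geom_pi (m : ℕ) {w : ℝ} (h0 : 0 ≤ w) (h1 : w < 1) :
    Summable (fun d : Fin m → ℕ => ∏ i, w ^ d i) := by
  induction m with
  | zero =>
    haveI : Unique (Fin 0 → ℕ) := ⟨⟨fun i => i.elim0⟩, fun f => funext fun i => i.elim0⟩
    exact Summable.of_finite
  | succ n ih =>
    have hprod := Summable.mul_of_nonneg (f := fun j : ℕ => w ^ j)
      (g := fun d : Fin n → ℕ => ∏ i, w ^ d i)
      (summable_geometric_of_lt_one h0 h1) ih (fun j => pow_nonneg h0 j)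
      (fun d => Finset.prod_nonneg fun i _ => pow_nonneg h0 _)
    have h2 := ((Fin.consEquiv (fun _ : Fin (n+1) => ℕ)).symm.summable_iff
      (f := fun p : ℕ × (Fin n → ℕ) => (w ^ p.1) * ∏ i, w ^ p.2 i)).mpr hprod
    refine h2.congr ?_
    intro d
    simp only [Function.comp, Fin.consEquiv_symm_apply]
    rw [Fin.prod_univ_succ]
    rfl

section Li
variable (r : ℕ) (k : Fin (r+1) → ℤ) {z : ℝ}

lemma multiLi_term_pos (h0 : 0 < z)
    (m : {f : Fin (r + 1) → ℕ // StrictMono f ∧ 0 < f 0}) :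
    0 < z ^ (m.1 (Fin.last r)) / ∏ i, ((m.1 i : ℝ)) ^ (k i) := by
  apply div_pos (pow_pos h0 _)
  apply Finset.prod_pos
  intro i _
  apply zpow_pos
  have h1 : 0 < m.1 i := lt_of_lt_of_le m.2.2 (m.2.1.monotone (Fin.zero_le i))
  exact_mod_cast h1

lemma multiLi_summable (h0 : 0 < z) (h1 : z < 1) :
    Summable (fun m : {f : Fin (r + 1) → ℕ // StrictMono f ∧ 0 < f 0} =>
      z ^ (m.1 (Fin.last r)) / ∏ i, ((m.1 i : ℝ)) ^ (k i)) := by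
  set N := ∑ i : Fin (r+1), (k i).natAbs with hN
  set u := (1+z)/2 with hu
  have hu0 : 0 < u := by positivity
  have hu1 : u < 1 := by rw [hu]; linarith
  have hzu : z < u := by rw [hu]; linarith
  have hzu1 : z/u < 1 := (div_lt_one hu0).mpr hzu
  have hzu0 : 0 ≤ z/u := by positivity
  obtain ⟨C, hC⟩ : BddAbove (Set.range (fun M : ℕ => (M:ℝ)^N * (z/u)^M)) := by
    apply Filter.Tendsto.bddAbove_range
    have hs := summable_pow_mul_geometric_of_norm_lt_one (R := ℝ) N
      (r := z/u) (by rwa [Real.norm_eq_abs, abs_of_nonneg hzu0])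
    exact hs.tendsto_atTop_zero
  have hCb : ∀ M : ℕ, z ^ M * (M:ℝ)^N ≤ C * u ^ M := by
    intro M
    have h3 : (M:ℝ)^N * (z/u)^M ≤ C := hC ⟨M, rfl⟩
    have h4 : z ^ M = (z/u)^M * u^M := by
      rw [← mul_pow, div_mul_cancel₀]
      exact ne_of_gt hu0
    calc z ^ M * (M:ℝ)^N = ((M:ℝ)^N * (z/u)^M) * u^M := by rw [h4]; ring
      _ ≤ C * u^M := by
          apply mul_le_mul_of_nonneg_right h3 (pow_nonneg hu0.le M)
  set w := u ^ (((r+1 : ℕ) : ℝ))⁻¹ with hw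
  have hw0 : 0 ≤ w := Real.rpow_nonneg hu0.le _
  have hw1 : w < 1 := Real.rpow_lt_one hu0.le hu1 (by positivity)
  have hwr : w ^ (r+1) = u := Real.rpow_inv_natCast_pow hu0.le (Nat.succ_ne_zero r)
  have hg : Summable (fun d : Fin (r+1) → ℕ => C * ∏ i, w ^ d i) :=
    (summable_geom_pi (r+1) hw0 hw1).mul_left C
  have hgs : Summable ((fun d : Fin (r+1) → ℕ => C * ∏ i, w ^ d i) ∘
      (Subtype.val : {f : Fin (r + 1) → ℕ // StrictMono f ∧ 0 < f 0} → (Fin (r+1) → ℕ))) :=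
    hg.comp_injective Subtype.val_injective
  apply Summable.of_nonneg_of_le (fun m => (multiLi_term_pos r k h0 m).le) _ hgs
  intro m
  obtain ⟨f, hsm, hf0⟩ := m
  simp only [Function.comp]
  set M := f (Fin.last r) with hM
  have hfi1 : ∀ i, 1 ≤ f i := fun i => lt_of_lt_of_le hf0 (hsm.monotone (Fin.zero_le i))
  have hfiM : ∀ i, f i ≤ M := fun i => hsm.monotone (Fin.le_last i)
  have hM1 : 1 ≤ M := hfi1 _
  have hterm : z ^ M / ∏ i, ((f i : ℝ)) ^ (k i) = z ^ M * ∏ i, ((f i : ℝ)) ^ (-(k i)) := by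
    rw [div_eq_mul_inv, ← Finset.prod_inv_distrib]
    congr 1
    exact Finset.prod_congr rfl fun i _ => (zpow_neg _ _).symm
  rw [hterm]
  have hb1 : ∏ i, ((f i : ℝ)) ^ (-(k i)) ≤ (M:ℝ) ^ N := by
    rw [hN, ← Finset.prod_pow_eq_pow_sum]
    apply Finset.prod_le_prod
    · intro i _
      positivity
    · intro i _
      rcases le_or_gt 0 (k i) with hk | hk
      · have h5 : (1:ℝ) ≤ (f i : ℝ) ^ (k i) := by
          obtain ⟨n, hn⟩ : ∃ n : ℕ, k i = (n : ℤ) := ⟨(k i).toNat, (Int.toNat_of_nonneg hk).symm⟩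
          rw [hn, zpow_natCast]
          exact one_le_pow₀ (by exact_mod_cast hfi1 i)
        calc ((f i : ℝ)) ^ (-(k i)) = ((f i : ℝ) ^ (k i))⁻¹ := by rw [zpow_neg]
          _ ≤ 1 := inv_le_one_of_one_le₀ h5
          _ ≤ (M:ℝ) ^ (k i).natAbs := one_le_pow₀ (by exact_mod_cast hM1)
      · have h6 : -(k i) = ((k i).natAbs : ℤ) := by omega
        rw [h6, zpow_natCast]
        apply pow_le_pow_left₀ (by positivity)
        exact_mod_cast hfiM i
  calc z ^ M * ∏ i, ((f i : ℝ)) ^ (-(k i)) ≤ z ^ M * (M:ℝ)^N := by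
        apply mul_le_mul_of_nonneg_left hb1 (pow_nonneg h0.le _)
    _ ≤ C * u ^ M := hCb M
    _ = C * (w ^ (r+1)) ^ M := by rw [hwr]
    _ = C * w ^ ((r+1) * M) := by rw [pow_mul]
    _ ≤ C * w ^ (∑ i, f i) := by
        have hCnn : 0 ≤ C := le_trans (by positivity) (hC ⟨1, rfl⟩)
        apply mul_le_mul_of_nonneg_left _ hCnn
        apply pow_le_pow_of_le_one hw0 hw1.le
        calc ∑ i, f i ≤ ∑ _i : Fin (r+1), M := Finset.sum_le_sum fun i _ => hfiM i
          _ = (r+1) * M := by simp [Finset.sum_const, Finset.card_univ]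
    _ = C * ∏ i, w ^ f i := by rw [Finset.prod_pow_eq_pow_sum]

lemma multiLi_pos (h0 : 0 < z) (h1 : z < 1) : 0 < multiLi (r+1) k z := by
  have hdef : multiLi (r+1) k z =
      ∑' m : {f : Fin (r + 1) → ℕ // StrictMono f ∧ 0 < f 0},
        z ^ (m.1 (Fin.last r)) / ∏ i, ((m.1 i : ℝ)) ^ (k i) := rfl
  rw [hdef]
  have m0 : {f : Fin (r + 1) → ℕ // StrictMono f ∧ 0 < f 0} :=
    ⟨fun i => (i : ℕ) + 1, fun i j hij => by simpa using hij, Nat.succ_pos 0⟩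
  exact Summable.tsum_pos (multiLi_summable r k h0 h1) (fun m => (multiLi_term_pos r k h0 m).le)
    m0 (multiLi_term_pos r k h0 m0)
end Li

section Main

open Real Filter

lemma abs_ne_zero_pos {t : ℝ} (h : t ≠ 0) : 0 < |t| := abs_pos.mpr h

/-- extraction of coefficients -/
lemma coeff_eq_of_tsum_eq (ca cb : ℕ → ℝ) (δ : ℝ) (hδ : 0 < δ) (t₀ : ℝ) (ht₀ : t₀ ≠ 0)
    (hsa : Summable (fun n => ca n * t₀ ^ n)) (hsb : Summable (fun n => cb n * t₀ ^ n))
    (heq : ∀ t : ℝ, |t| < δ → t ≠ 0 → ∑' n, ca n * t ^ n = ∑' n, cb n * t ^ n) :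
    ∀ n, ca n = cb n := by
  classical
  set p := FormalMultilinearSeries.ofScalars ℝ ca with hp
  set q := FormalMultilinearSeries.ofScalars ℝ cb with hq
  have hrad : ∀ (c : ℕ → ℝ), Summable (fun n => c n * t₀ ^ n) →
      0 < (FormalMultilinearSeries.ofScalars ℝ c).radius := by
    intro c hs
    have h1 : Filter.Tendsto (fun n => ‖c n * t₀ ^ n‖) atTop (nhds 0) := by
      simpa using hs.tendsto_atTop_zero.norm
    obtain ⟨C, hC⟩ := h1.bddAbove_range
    have h2 : (‖t₀‖₊ : ENNReal) ≤ (FormalMultilinearSeries.ofScalars ℝ c).radius := by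
      apply FormalMultilinearSeries.le_radius_of_bound _ C
      intro n
      have h3 : ‖(FormalMultilinearSeries.ofScalars ℝ c) n‖ = ‖c n‖ :=
        FormalMultilinearSeries.ofScalars_norm ℝ c n
      rw [h3]
      have := hC ⟨n, rfl⟩
      calc ‖c n‖ * (‖t₀‖₊ : ℝ) ^ n = ‖c n * t₀ ^ n‖ := by
            rw [norm_mul, norm_pow]; rfl
        _ ≤ C := this
    refine lt_of_lt_of_le ?_ h2
    simpa using ht₀
  have hpr : 0 < p.radius := hrad ca hsa
  have hqr : 0 < q.radius := hrad cb hsb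
  have hps : HasFPowerSeriesAt p.sum p 0 := (p.hasFPowerSeriesOnBall hpr).hasFPowerSeriesAt
  have hqs : HasFPowerSeriesAt q.sum q 0 := (q.hasFPowerSeriesOnBall hqr).hasFPowerSeriesAt
  have hsum_eq : ∀ (c : ℕ → ℝ) (t : ℝ),
      (FormalMultilinearSeries.ofScalars ℝ c).sum t = ∑' n, c n * t ^ n := by
    intro c t
    refine tsum_congr fun n => ?_
    rw [FormalMultilinearSeries.ofScalars_apply_eq]
    simp [smul_eq_mul]
  have heqp : ∀ t : ℝ, |t| < δ → t ≠ 0 → p.sum t = q.sum t := by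
    intro t h1 h2
    rw [hsum_eq, hsum_eq]
    exact heq t h1 h2
  -- equality at 0 by continuity
  have hcp : ContinuousAt p.sum 0 := hps.continuousAt
  have hcq : ContinuousAt q.sum 0 := hqs.continuousAt
  have hball : ∀ᶠ t : ℝ in nhds 0, |t| < δ := by
    have := Metric.ball_mem_nhds (0 : ℝ) hδ
    filter_upwards [this] with t ht
    simpa [Real.dist_eq] using ht
  have hpunct : p.sum =ᶠ[nhdsWithin (0:ℝ) {(0:ℝ)}ᶜ] q.sum := by
    have hb2 : ∀ᶠ t : ℝ in nhdsWithin (0:ℝ) {(0:ℝ)}ᶜ, |t| < δ :=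
      eventually_nhdsWithin_of_eventually_nhds hball
    filter_upwards [hb2, self_mem_nhdsWithin] with t h1 h2
    exact heqp t h1 h2
  have h00 : p.sum 0 = q.sum 0 := by
    have t1 : Tendsto p.sum (nhdsWithin (0:ℝ) {(0:ℝ)}ᶜ) (nhds (p.sum 0)) :=
      hcp.continuousWithinAt.tendsto
    have t2 : Tendsto p.sum (nhdsWithin (0:ℝ) {(0:ℝ)}ᶜ) (nhds (q.sum 0)) := by
      have t3 : Tendsto q.sum (nhdsWithin (0:ℝ) {(0:ℝ)}ᶜ) (nhds (q.sum 0)) :=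
        hcq.continuousWithinAt.tendsto
      exact t3.congr' hpunct.symm
    exact tendsto_nhds_unique t1 t2
  have hev : p.sum =ᶠ[nhds (0:ℝ)] q.sum := by
    filter_upwards [hball] with t ht
    by_cases h : t = 0
    · rw [h]; exact h00
    · exact heqp t ht h
  have hqs' : HasFPowerSeriesAt p.sum q 0 := hqs.congr hev.symm
  have hpq : p = q := hps.eq_formalMultilinearSeries hqs'
  have := (FormalMultilinearSeries.ofScalars_series_eq_iff (𝕜 := ℝ) ℝ (c := ca) cb).mp hpq
  exact fun n => congrFun this n

end Main

/-- Relation between generalized multi poly-Bernoulli polynomials and the plain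
multi poly-Bernoulli polynomials. -/
theorem genMultiPolyBernoulli_eq_scaled (r : ℕ) (k : Fin (r + 1) → ℤ) (a b c : ℝ)
    (ha : 0 < a) (hb : 0 < b) (hc : 0 < c) (hab : a * b ≠ 1)
    (Bg : ℕ → ℝ → ℝ) (Bp : ℕ → ℝ → ℝ) (ε : ℝ) (hε : 0 < ε)
    (hBg : ∀ (x t : ℝ), |t| < ε → t ≠ 0 →
      ∑' n : ℕ, Bg n x * t ^ n / (n.factorial : ℝ) =
        multiLi (r + 1) k (1 - (a * b) ^ (-t)) / (b ^ t - a ^ (-t)) ^ (r + 1) *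
          c ^ (x * t))
    (hBp : ∀ (y t : ℝ), |t| < ε → t ≠ 0 →
      ∑' n : ℕ, Bp n y * t ^ n / (n.factorial : ℝ) =
        multiLi (r + 1) k (1 - Real.exp (-t)) / (1 - Real.exp (-t)) ^ (r + 1) *
          Real.exp (y * t)) :
    ∀ (n : ℕ) (x : ℝ), Bg n x =
      (Real.log a + Real.log b) ^ n *
        Bp n ((x * Real.log c - ((r : ℝ) + 1) * Real.log b) / (Real.log a + Real.log b)) := by
  intro n x
  set L := Real.log a + Real.log b with hLdef
  set y := (x * Real.log c - ((r : ℝ) + 1) * Real.log b) / L with hydef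
  have hab0 : 0 < a * b := mul_pos ha hb
  have hLab : L = Real.log (a * b) := (Real.log_mul ha.ne' hb.ne').symm
  have hL : L ≠ 0 := by
    rw [hLab]
    intro h
    rcases Real.log_eq_zero.mp h with h1 | h1 | h1
    · exact absurd h1 hab0.ne'
    · exact hab h1
    · linarith
  set δ := ε / (1 + |L|) with hδdef
  have habsL : 0 < |L| := abs_pos.mpr hL
  have hδ : 0 < δ := by positivity
  have hδε : δ ≤ ε := by
    rw [hδdef, div_le_iff₀ (by positivity)]
    nlinarith [abs_nonneg L]
  have hLδ : ∀ t : ℝ, |t| < δ → |L * t| < ε := by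
    intro t ht
    rw [abs_mul]
    calc |L| * |t| ≤ |L| * δ := by
          apply mul_le_mul_of_nonneg_left ht.le (abs_nonneg L)
      _ = ε * |L| / (1 + |L|) := by ring
      _ < ε := by
          rw [div_lt_iff₀ (by positivity)]
          nlinarith
  -- exp rewrites
  have e1 : ∀ t : ℝ, (a*b) ^ (-t) = Real.exp (-(L*t)) := by
    intro t
    rw [Real.rpow_def_of_pos hab0, ← hLab]
    ring_nf
  have e5 : ∀ t : ℝ, b ^ t - a ^ (-t) = Real.exp (Real.log b * t) * (1 - Real.exp (-(L*t))) := by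
    intro t
    rw [Real.rpow_def_of_pos hb, Real.rpow_def_of_pos ha, mul_sub, mul_one, ← Real.exp_add]
    ring_nf
    rw [hLdef]; ring_nf
  have hzpos : ∀ t : ℝ, 0 < L * t → 0 < 1 - Real.exp (-(L*t)) ∧ 1 - Real.exp (-(L*t)) < 1 := by
    intro t ht
    constructor
    · have : Real.exp (-(L*t)) < 1 := Real.exp_lt_one_iff.mpr (by linarith)
      linarith
    · have : 0 < Real.exp (-(L*t)) := Real.exp_pos _
      linarith
  -- key algebraic identity
  have key : ∀ t : ℝ, t ≠ 0 →
      multiLi (r + 1) k (1 - (a * b) ^ (-t)) / (b ^ t - a ^ (-t)) ^ (r + 1) * c ^ (x * t) =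
      multiLi (r + 1) k (1 - Real.exp (-(L*t))) / (1 - Real.exp (-(L*t))) ^ (r + 1) *
        Real.exp (y * (L*t)) := by
    intro t ht
    have hLt : L * t ≠ 0 := mul_ne_zero hL ht
    have hE2 : (1:ℝ) - Real.exp (-(L*t)) ≠ 0 := by
      intro h
      have : Real.exp (-(L*t)) = 1 := by linarith [sub_eq_zero.mp h]
      rw [Real.exp_eq_one_iff] at this
      exact hLt (by linarith [neg_eq_zero.mp this])
    have e4 : c ^ (x * t) = Real.exp (Real.log c * (x*t)) := Real.rpow_def_of_pos hc _
    have e6 : y * (L*t) = (x * Real.log c - ((r:ℝ)+1) * Real.log b) * t := by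
      rw [hydef]
      field_simp
    rw [e1, e5, e4, e6, mul_pow, ← Real.exp_nat_mul]
    rw [div_mul_eq_mul_div, div_mul_eq_mul_div, div_eq_div_iff
      (by positivity) (by exact pow_ne_zero _ hE2)]
    have hexp : Real.exp ((x * Real.log c - ((r:ℝ)+1) * Real.log b) * t) *
        Real.exp (((r+1 : ℕ) : ℝ) * (Real.log b * t)) = Real.exp (Real.log c * (x * t)) := by
      rw [← Real.exp_add]
      congr 1
      push_cast
      ring
    rw [← hexp]
    ring
  -- choice of t₀
  set t₀ := if 0 < L then δ/2 else -(δ/2) with ht₀def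
  have ht₀abs : |t₀| = δ/2 := by
    rw [ht₀def]
    split
    · exact abs_of_pos (by linarith)
    · rw [abs_neg]; exact abs_of_pos (by linarith)
  have ht₀δ : |t₀| < δ := by rw [ht₀abs]; linarith
  have ht₀ : t₀ ≠ 0 := by
    intro h
    rw [h, abs_zero] at ht₀abs
    linarith
  have hLt₀pos : 0 < L * t₀ := by
    rw [ht₀def]
    split
    · next h => exact mul_pos h (by linarith)
    · next h =>
        have hLneg : L < 0 := lt_of_le_of_ne (not_lt.mp h) hL
        exact mul_pos_of_neg_of_neg hLneg (by linarith)
  obtain ⟨hz0, hz1⟩ := hzpos t₀ hLt₀pos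
  have hA := multiLi_pos r k hz0 hz1
  -- summability of the Bg series at t₀
  have hsum1 : Summable (fun m : ℕ => Bg m x * t₀ ^ m / (m.factorial : ℝ)) := by
    by_contra h
    have hRHS1 : multiLi (r + 1) k (1 - (a * b) ^ (-t₀)) / (b ^ t₀ - a ^ (-t₀)) ^ (r + 1) *
        c ^ (x * t₀) ≠ 0 := by
      rw [e1, e5]
      have h1 : (0:ℝ) < Real.exp (Real.log b * t₀) * (1 - Real.exp (-(L*t₀))) :=
        mul_pos (Real.exp_pos _) hz0
      have h2 : (0:ℝ) < c ^ (x * t₀) := Real.rpow_pos_of_pos hc _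
      exact ne_of_gt (mul_pos (div_pos hA (pow_pos h1 _)) h2)
    apply hRHS1
    rw [← hBg x t₀ (lt_of_lt_of_le ht₀δ hδε) ht₀]
    exact tsum_eq_zero_of_not_summable h
  -- summability of the Bp series at L * t₀
  have hsum2 : Summable (fun m : ℕ => Bp m y * (L * t₀) ^ m / (m.factorial : ℝ)) := by
    by_contra h
    have hRHS2 : multiLi (r + 1) k (1 - Real.exp (-(L * t₀))) /
        (1 - Real.exp (-(L * t₀))) ^ (r + 1) * Real.exp (y * (L * t₀)) ≠ 0 := by
      have h2 : (0:ℝ) < Real.exp (y * (L * t₀)) := Real.exp_pos _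
      exact ne_of_gt (mul_pos (div_pos hA (pow_pos hz0 _)) h2)
    apply hRHS2
    rw [← hBp y (L * t₀) (hLδ t₀ ht₀δ) (ne_of_gt hLt₀pos)]
    exact tsum_eq_zero_of_not_summable h
  -- coefficient extraction
  set ca : ℕ → ℝ := fun m => Bg m x / (m.factorial : ℝ) with hcadef
  set cb : ℕ → ℝ := fun m => L ^ m * Bp m y / (m.factorial : ℝ) with hcbdef
  have hsa : Summable (fun m => ca m * t₀ ^ m) := hsum1.congr fun m => by
    rw [hcadef]; ring
  have hsb : Summable (fun m => cb m * t₀ ^ m) := hsum2.congr fun m => by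
    rw [hcbdef, mul_pow]; ring
  have heq : ∀ t : ℝ, |t| < δ → t ≠ 0 → ∑' m, ca m * t ^ m = ∑' m, cb m * t ^ m := by
    intro t h1 h2
    have hA1 : ∑' m, ca m * t ^ m = ∑' m : ℕ, Bg m x * t ^ m / (m.factorial : ℝ) :=
      tsum_congr fun m => by rw [hcadef]; ring
    have hB1 : ∑' m, cb m * t ^ m = ∑' m : ℕ, Bp m y * (L * t) ^ m / (m.factorial : ℝ) :=
      tsum_congr fun m => by rw [hcbdef, mul_pow]; ring
    rw [hA1, hB1, hBg x t (lt_of_lt_of_le h1 hδε) h2,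
      hBp y (L * t) (hLδ t h1) (mul_ne_zero hL h2), key t h2]
  have hcoef := coeff_eq_of_tsum_eq ca cb δ hδ t₀ ht₀ hsa hsb heq n
  rw [hcadef, hcbdef] at hcoef
  have hfac : ((n.factorial : ℝ)) ≠ 0 := Nat.cast_ne_zero.mpr n.factorial_ne_zero
  field_simp at hcoef
  exact hcoef
end
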